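/- arXiv:math/0202171 — 2 statements merged into one kernel-verified Lean document; each statement's English description precedes it below -/
import Mathlib

section
/- In a homogeneously self-similar graph with constant inner degree b > θ_X − 1, a vertex has infinite degree if and only if it lies in F^n for every positive integer n, which happens if and only if it is an origin vertex (a fixed point of ψ). -/
variable {V : Type*}

/-- `C` is a cell w.r.t. `F`: a connected component of `V X ∖ F`. -/
def IsCellOf (G : SimpleGraph V) (F : Set V) (C : Set V) : Prop :=
  C.Nonempty ∧ C ⊆ Fᶜ ∧ (G.induce C).Preconnected ∧
    ∀ D : Set V, C ⊆ D → D ⊆ Fᶜ → (G.induce D).Preconnected → D = C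

/-- vertex boundary θC -/
def vBoundary (G : SimpleGraph V) (C : Set V) : Set V :=
  {v | v ∉ C ∧ ∃ c ∈ C, G.Adj v c}

/-- closure of a set of vertices -/
def vClosure (G : SimpleGraph V) (C : Set V) : Set V := C ∪ vBoundary G C

/-- edge boundary δC -/
def eBoundary (G : SimpleGraph V) (C : Set V) : Set (Sym2 V) :=
  {e | ∃ x y, G.Adj x y ∧ e = s(x, y) ∧ x ∈ C ∧ y ∉ C}

/-- edges of the cell graph Ĉ (subgraph spanned by the closure of C) -/
def cellEdges (G : SimpleGraph V) (C : Set V) : Set (Sym2 V) :=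
  {e | ∃ x y, G.Adj x y ∧ e = s(x, y) ∧ x ∈ vClosure G C ∧ y ∈ vClosure G C}

/-- the reduced graph X_F -/
def reducedGraph (G : SimpleGraph V) (F : Set V) : SimpleGraph F where
  Adj x y := x ≠ y ∧ ∃ C : Set V, IsCellOf G F C ∧
    (x : V) ∈ vBoundary G C ∧ (y : V) ∈ vBoundary G C
  symm := by
    constructor
    rintro x y ⟨hxy, C, hC, hx, hy⟩
    exact ⟨hxy.symm, C, hC, hy, hx⟩
  loopless := by constructor; rintro x ⟨hx, -⟩; exact hx rfl

/-- F^n = ψ^n (V X), as a subset of V -/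
def Fpow (G : SimpleGraph V) (F : Set V) (ψ : G ≃g reducedGraph G F) : ℕ → Set V
  | 0 => Set.univ
  | n + 1 => (fun v => ((ψ v : F) : V)) '' Fpow G F ψ n

/-- (F1) no two vertices of F adjacent -/
def AxiomF1 (G : SimpleGraph V) (F : Set V) : Prop :=
  ∀ x ∈ F, ∀ y ∈ F, ¬ G.Adj x y

/-- (F2) closures of distinct cells share at most one vertex -/
def AxiomF2 (G : SimpleGraph V) (F : Set V) : Prop :=
  ∀ C D : Set V, IsCellOf G F C → IsCellOf G F D → C ≠ D →
    (vClosure G C ∩ vClosure G D).Subsingleton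

/-- (H1) cell graphs finite, pairwise isomorphic via boundary preserving isomorphisms -/
def AxiomH1 (G : SimpleGraph V) (F : Set V) : Prop :=
  (∀ C : Set V, IsCellOf G F C → (vClosure G C).Finite) ∧
  ∀ C D : Set V, IsCellOf G F C → IsCellOf G F D →
    ∃ α : G.induce (vClosure G C) ≃g G.induce (vClosure G D),
      ∀ x : vClosure G C, (x : V) ∈ vBoundary G C → ((α x : vClosure G D) : V) ∈ vBoundary G D

/-- (H2) any two distinct boundary vertices of a cell are at distance ν -/
def AxiomH2 (G : SimpleGraph V) (F : Set V) (ν : ℕ) : Prop :=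
  ∀ C : Set V, IsCellOf G F C → ∀ x ∈ vBoundary G C, ∀ y ∈ vBoundary G C,
    x ≠ y → G.dist x y = ν

/-- constant inner degree `b` : every boundary vertex of every cell has degree b in the cell graph -/
def ConstInnerDegree (G : SimpleGraph V) (F : Set V) (b : ℕ) : Prop :=
  ∀ C : Set V, IsCellOf G F C → ∀ v ∈ vBoundary G C,
    {u ∈ vClosure G C | G.Adj v u}.ncard = b

/-- bounded geometry: vertex degrees uniformly bounded -/
def BoundedGeometry (G : SimpleGraph V) : Prop :=
  ∃ M : ℕ, ∀ v : V, (G.neighborSet v).Finite ∧ (G.neighborSet v).ncard ≤ M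

/-- volume of a set of vertices -/
noncomputable def volOf (G : SimpleGraph V) (A : Set V) : ℕ :=
  ∑ᶠ v ∈ A, (G.neighborSet v).ncard

/-- growth function -/
noncomputable def Vfun (G : SimpleGraph V) (x : V) (r : ℕ) : ℕ :=
  volOf G {y | G.dist x y ≤ r}


section CellAux

open SimpleGraph Set

variable {V : Type*} {G : SimpleGraph V} {F : Set V}

private lemma reach_induce_of_walk_induce {A B : Set V} :
    ∀ {x y : ↥B} (p : (G.induce B).Walk x y)
      (_ : ∀ z ∈ p.support, (z : V) ∈ A) (hx : (x : V) ∈ A) (hy : (y : V) ∈ A),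
      (G.induce A).Reachable ⟨x, hx⟩ ⟨y, hy⟩ := by
  intro x y p
  induction p with
  | nil => intro _ hx hy; rfl
  | @cons u c w h q ih =>
    intro hsupp hx hy
    have hc : (c : V) ∈ A := hsupp c (by simp)
    have hadj : (G.induce A).Adj ⟨u, hx⟩ ⟨c, hc⟩ := by
      simpa using ((SimpleGraph.comap_adj).mp h : G.Adj (u : V) (c : V))
    exact (hadj.reachable).trans (ih (fun z hz => hsupp z (by simp [hz])) hc hy)

private lemma mem_of_mem_support_reach {W : Type*} {H : SimpleGraph W} {x y : W}
    (p : H.Walk x y) {z : W} (hz : z ∈ p.support) : H.Reachable x z := by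
  classical
  exact (p.takeUntil z hz).reachable

/-- The cell containing a vertex `c ∉ F`. -/
def cellOf (G : SimpleGraph V) (F : Set V) (c : V) : Set V :=
  {w | ∃ (hc : c ∈ Fᶜ) (hw : w ∈ Fᶜ), (G.induce Fᶜ).Reachable ⟨c, hc⟩ ⟨w, hw⟩}

lemma cellOf_subset : cellOf G F c ⊆ Fᶜ := by
  rintro w ⟨hc, hw, -⟩; exact hw

lemma mem_cellOf_self (hc : c ∉ F) : c ∈ cellOf G F c := ⟨hc, hc, Reachable.refl _⟩

lemma preconnected_induce_cellOf (hc : c ∉ F) : (G.induce (cellOf G F c)).Preconnected := by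
  rintro ⟨x, hxc, hx, hreachx⟩ ⟨y, hyc, hy, hreachy⟩
  obtain ⟨p⟩ := hreachx.symm.trans hreachy
  have hsupp : ∀ z ∈ p.support, (z : V) ∈ cellOf G F c := by
    intro z hz
    exact ⟨hc, z.2, hreachx.trans (mem_of_mem_support_reach p hz)⟩
  exact reach_induce_of_walk_induce p hsupp ⟨hc, hx, hreachx⟩ ⟨hc, hy, hreachy⟩

lemma cell_eq_cellOf (hC : IsCellOf G F C) (hc : c ∈ C) : C = cellOf G F c := by
  have hcF : c ∈ Fᶜ := hC.2.1 hc
  have hsub : C ⊆ cellOf G F c := by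
    intro w hw
    have hr : (G.induce C).Reachable ⟨c, hc⟩ ⟨w, hw⟩ := hC.2.2.1 _ _
    have := hr.map (G.induceHomOfLE hC.2.1).toHom
    exact ⟨hcF, hC.2.1 hw, this⟩
  exact (hC.2.2.2 (cellOf G F c) hsub cellOf_subset (preconnected_induce_cellOf hcF)).symm

lemma cellOf_isCell (hc : c ∉ F) : IsCellOf G F (cellOf G F c) := by
  refine ⟨⟨c, mem_cellOf_self hc⟩, cellOf_subset, preconnected_induce_cellOf hc, ?_⟩
  intro D hsub hDF hpre
  refine subset_antisymm ?_ hsub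
  intro w hw
  have hcD : c ∈ D := hsub (mem_cellOf_self hc)
  have hr : (G.induce D).Reachable ⟨c, hcD⟩ ⟨w, hw⟩ := hpre _ _
  exact ⟨hc, hDF hw, hr.map (G.induceHomOfLE hDF).toHom⟩

lemma mem_cellOf_of_adj (hc : c ∉ F) (hd : d ∉ F) (h : G.Adj c d) : d ∈ cellOf G F c := by
  have hadj : (G.induce Fᶜ).Adj ⟨c, hc⟩ ⟨d, hd⟩ := by simpa using h
  exact ⟨hc, hd, hadj.reachable⟩

end CellAux
section CellAux2

open SimpleGraph Set

variable {V : Type*} {G : SimpleGraph V} {F : Set V} {C : Set V} {c d v : V}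

lemma boundary_subset_F (hC : IsCellOf G F C) : vBoundary G C ⊆ F := by
  rintro v ⟨hvC, c, hc, hadj⟩
  by_contra hvF
  have hCe : C = cellOf G F c := cell_eq_cellOf hC hc
  have hcF : c ∉ F := hC.2.1 hc
  exact hvC (hCe ▸ mem_cellOf_of_adj hcF hvF hadj.symm)

lemma mem_boundary_cellOf (hv : v ∈ F) (hc : c ∉ F) (hadj : G.Adj v c) :
    v ∈ vBoundary G (cellOf G F c) := by
  refine ⟨fun h => (cellOf_subset h) hv, c, mem_cellOf_self hc, hadj⟩

lemma nbr_subset_closure_cellOf (hc : c ∉ F) :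
    G.neighborSet c ⊆ vClosure G (cellOf G F c) := by
  intro u hu
  have hadj : G.Adj c u := hu
  by_cases huF : u ∈ F
  · exact Or.inr ⟨fun h => (cellOf_subset h) huF, c, mem_cellOf_self hc, hadj.symm⟩
  · exact Or.inl (mem_cellOf_of_adj hc huF hadj)

lemma finite_nbr_of_not_mem_F (hH1 : AxiomH1 G F) (hc : c ∉ F) :
    (G.neighborSet c).Finite :=
  (hH1.1 _ (cellOf_isCell hc)).subset (nbr_subset_closure_cellOf hc)

lemma cells_disjoint {D : Set V} (hC : IsCellOf G F C) (hD : IsCellOf G F D)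
    (hne : C ≠ D) : Disjoint C D := by
  rw [Set.disjoint_left]
  intro a haC haD
  exact hne ((cell_eq_cellOf hC haC).trans (cell_eq_cellOf hD haD).symm)

end CellAux2
section DistAux

open SimpleGraph Set

variable {V : Type*} {G : SimpleGraph V} {F : Set V} {C : Set V} {c v : V}

lemma iso_dist_eq {W : Type*} {H : SimpleGraph W} (e : G ≃g H) (x y : V)
    (hr : G.Reachable x y) : H.dist (e x) (e y) = G.dist x y := by
  obtain ⟨p, hp⟩ := hr.exists_walk_length_eq_dist
  have h1 : H.dist (e x) (e y) ≤ G.dist x y := by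
    simpa [hp] using SimpleGraph.dist_le (p.map e.toHom)
  obtain ⟨q, hq⟩ := (hr.map e.toHom).exists_walk_length_eq_dist
  have h2 : G.dist x y ≤ H.dist (e x) (e y) := by
    have := SimpleGraph.dist_le ((q.map e.symm.toHom).copy
      (e.symm_apply_apply x) (e.symm_apply_apply y))
    simpa [hq] using this
  omega

lemma reduced_preconnected (ψ : G ≃g reducedGraph G F) (hconn : G.Connected) :
    (reducedGraph G F).Preconnected := by
  intro a b
  have := (hconn (ψ.symm a) (ψ.symm b)).map ψ.toHom
  simpa using this

/-- From a walk starting in a cell and ending in `F`, extract the first boundary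
vertex met. -/
lemma exists_boundary_vertex :
    ∀ {c b : V} (q : G.Walk c b), c ∉ F → b ∈ F →
      ∃ (z : V) (r : G.Walk z b), z ∈ vBoundary G (cellOf G F c) ∧ 1 + r.length ≤ q.length := by
  intro c b q
  induction q with
  | nil => intro hc hb; exact absurd hb hc
  | @cons u d w h q ih =>
    intro hc hb
    by_cases hdF : d ∈ F
    · refine ⟨d, q, ?_, by simp only [SimpleGraph.Walk.length_cons]; omega⟩
      exact ⟨fun hmem => (cellOf_subset hmem) hdF, u, mem_cellOf_self hc, h.symm⟩
    · obtain ⟨z, r, hz, hlen⟩ := ih hdF hb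
      have hcell : cellOf G F u = cellOf G F d := by
        have hdu : d ∈ cellOf G F u := mem_cellOf_of_adj hc hdF h
        exact (cell_eq_cellOf (cellOf_isCell hc) hdu).symm ▸ rfl
      refine ⟨z, r, ?_, by simpa using Nat.le_succ_of_le hlen⟩
      rwa [hcell]

lemma two_mul_redDist_le_walk (hconn : G.Connected) (ψ : G ≃g reducedGraph G F)
    (hF1 : AxiomF1 G F) :
    ∀ (n : ℕ) {a b : V} (p : G.Walk a b), p.length = n → ∀ (ha : a ∈ F) (hb : b ∈ F),
      2 * (reducedGraph G F).dist ⟨a, ha⟩ ⟨b, hb⟩ ≤ p.length := by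
  intro n
  induction n using Nat.strong_induction_on with
  | _ n IH =>
    intro a b p hn ha hb
    by_cases hab : a = b
    · subst hab
      rw [SimpleGraph.dist_self]
      omega
    · cases p with
      | nil => exact absurd rfl hab
      | @cons _ d _ h q =>
        have hdF : d ∉ F := fun hdF => hF1 a ha d hdF h
        obtain ⟨z, r, hz, hlen⟩ := exists_boundary_vertex q hdF hb
        have hzF : z ∈ F := boundary_subset_F (cellOf_isCell hdF) hz
        have haB : a ∈ vBoundary G (cellOf G F d) :=
          mem_boundary_cellOf ha hdF h
        have hrlt : r.length < n := by simp at hn; omega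
        have hIH : 2 * (reducedGraph G F).dist ⟨z, hzF⟩ ⟨b, hb⟩ ≤ r.length :=
          IH r.length hrlt r rfl hzF hb
        by_cases haz : a = z
        · subst haz
          have : (⟨a, hzF⟩ : F) = ⟨a, ha⟩ := rfl
          calc 2 * (reducedGraph G F).dist ⟨a, ha⟩ ⟨b, hb⟩
              = 2 * (reducedGraph G F).dist ⟨a, hzF⟩ ⟨b, hb⟩ := rfl
            _ ≤ r.length := hIH
            _ ≤ (SimpleGraph.Walk.cons h q).length := by simp at hn ⊢; omega
        · have hadj : (reducedGraph G F).Adj ⟨a, ha⟩ ⟨z, hzF⟩ :=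
            ⟨fun hh => haz (congrArg Subtype.val hh), cellOf G F d,
              cellOf_isCell hdF, haB, hz⟩
          have hreach : (reducedGraph G F).Reachable ⟨z, hzF⟩ ⟨b, hb⟩ :=
            reduced_preconnected ψ hconn _ _
          obtain ⟨q', hq'⟩ := hreach.exists_walk_length_eq_dist
          have hd1 : (reducedGraph G F).dist ⟨a, ha⟩ ⟨b, hb⟩ ≤
              1 + (reducedGraph G F).dist ⟨z, hzF⟩ ⟨b, hb⟩ := by
            have := SimpleGraph.dist_le (SimpleGraph.Walk.cons hadj q')
            simpa [hq', Nat.add_comm] using this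
          have : (SimpleGraph.Walk.cons h q).length = q.length + 1 := by simp
          omega

/-- ψ doubles distances. -/
lemma dist_double (hconn : G.Connected) (ψ : G ≃g reducedGraph G F)
    (hF1 : AxiomF1 G F) (x y : V) :
    2 * G.dist x y ≤ G.dist ((ψ x : F) : V) ((ψ y : F) : V) := by
  have h1 : (reducedGraph G F).dist (ψ x) (ψ y) = G.dist x y :=
    iso_dist_eq ψ x y (hconn x y)
  obtain ⟨p, hp⟩ := (hconn ((ψ x : F) : V) ((ψ y : F) : V)).exists_walk_length_eq_dist
  have h2 := two_mul_redDist_le_walk hconn ψ hF1 p.length p rfl (ψ x).2 (ψ y).2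
  have h3 : (⟨((ψ x : F) : V), (ψ x).2⟩ : F) = ψ x := rfl
  have h4 : (⟨((ψ y : F) : V), (ψ y).2⟩ : F) = ψ y := rfl
  rw [h3, h4, h1] at h2
  omega

end DistAux
section FpowAux

open SimpleGraph Set

variable {V : Type*} {G : SimpleGraph V} {F : Set V}

lemma Fpow_eq_iterate (ψ : G ≃g reducedGraph G F) (n : ℕ) :
    Fpow G F ψ n = (fun v => ((ψ v : F) : V))^[n] '' Set.univ := by
  induction n with
  | zero => simp [Fpow]
  | succ n ih =>
    show (fun v => ((ψ v : F) : V)) '' Fpow G F ψ n = _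
    rw [ih, ← Set.image_comp, ← Function.iterate_succ']

lemma psiCoe_injective (ψ : G ≃g reducedGraph G F) :
    Function.Injective (fun v => ((ψ v : F) : V)) := by
  intro x y h
  exact ψ.toEquiv.injective (Subtype.coe_injective h)

lemma mem_F_of_coe (ψ : G ≃g reducedGraph G F) {a : V} (ha : a ∈ F) :
    a ∈ Fpow G F ψ 1 := by
  rw [Fpow_eq_iterate]
  exact ⟨ψ.symm ⟨a, ha⟩, Set.mem_univ _, by simp⟩

lemma origin_iff_mem_all (hconn : G.Connected) (ψ : G ≃g reducedGraph G F)
    (hF1 : AxiomF1 G F) (v : V) :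
    (∀ n : ℕ, 1 ≤ n → v ∈ Fpow G F ψ n) ↔ ((ψ v : F) : V) = v := by
  set f : V → V := fun v => ((ψ v : F) : V) with hf
  constructor
  · intro hmem
    have hex : ∀ n : ℕ, ∃ u, f^[n] u = v := by
      intro n
      cases n with
      | zero => exact ⟨v, rfl⟩
      | succ n =>
        have := hmem (n + 1) (by omega)
        rw [Fpow_eq_iterate] at this
        obtain ⟨u, -, hu⟩ := this
        exact ⟨u, hu⟩
    choose u hu using hex
    have hstep : ∀ n, f (u (n + 1)) = u n := by
      intro n
      have hinj : Function.Injective f^[n] :=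
        Function.Injective.iterate (psiCoe_injective ψ) n
      apply hinj
      rw [← Function.iterate_succ_apply, hu, hu]
    have hkey : ∀ n, 2 ^ n * G.dist (u (n + 1)) (u n) ≤ G.dist (u 1) (u 0) := by
      intro n
      induction n with
      | zero => simp
      | succ n ih =>
        have hdbl : 2 * G.dist (u (n + 2)) (u (n + 1)) ≤
            G.dist (f (u (n + 2))) (f (u (n + 1))) :=
          dist_double hconn ψ hF1 _ _
        rw [hstep (n + 1), hstep n] at hdbl
        have : 2 ^ (n + 1) * G.dist (u (n + 2)) (u (n + 1)) ≤
            2 ^ n * G.dist (u (n + 1)) (u n) := by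
          rw [pow_succ]
          calc 2 ^ n * 2 * G.dist (u (n + 2)) (u (n + 1))
              = 2 ^ n * (2 * G.dist (u (n + 2)) (u (n + 1))) := by ring
            _ ≤ 2 ^ n * G.dist (u (n + 1)) (u n) :=
                Nat.mul_le_mul_left _ hdbl
        exact le_trans this ih
    set d : ℕ := G.dist (u 1) (u 0) with hd
    have hlt : d < 2 ^ d := Nat.lt_two_pow_self
    have h0 : G.dist (u (d + 1)) (u d) = 0 := by
      have := hkey d
      by_contra hne
      have : 2 ^ d ≤ 2 ^ d * G.dist (u (d + 1)) (u d) :=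
        Nat.le_mul_of_pos_right _ (Nat.pos_of_ne_zero hne)
      omega
    have heq : u (d + 1) = u d := (hconn.dist_eq_zero_iff).mp h0
    have hfix : f (u d) = u d := by
      conv_lhs => rw [← heq]
      exact hstep d
    have hv : v = u d := by
      rw [← hu d, Function.iterate_fixed hfix]
    rw [hv]; exact hfix
  · intro hfix n _
    rw [Fpow_eq_iterate]
    exact ⟨v, Set.mem_univ _, Function.iterate_fixed hfix n⟩

end FpowAux
section CountAux

open SimpleGraph Set

variable {V : Type*} {G : SimpleGraph V} {F : Set V}

lemma my_ncard_biUnion_eq {ι α : Type*} {s : Set ι} (hs : s.Finite) {t : ι → Set α} {k : ℕ} :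
    (∀ i ∈ s, (t i).ncard = k) → (∀ i ∈ s, (t i).Finite) →
    (∀ i ∈ s, ∀ j ∈ s, i ≠ j → Disjoint (t i) (t j)) →
    (⋃ i ∈ s, t i).ncard = s.ncard * k := by
  refine Set.Finite.induction_on (motive := fun s _ => (∀ i ∈ s, (t i).ncard = k) →
    (∀ i ∈ s, (t i).Finite) → (∀ i ∈ s, ∀ j ∈ s, i ≠ j → Disjoint (t i) (t j)) →
    (⋃ i ∈ s, t i).ncard = s.ncard * k) s hs (by simp) ?_
  intro a s ha hsf ih hcard hfin hdisj
  rw [Set.biUnion_insert]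
  have hd : Disjoint (t a) (⋃ i ∈ s, t i) := by
    rw [Set.disjoint_iUnion₂_right]
    intro i hi
    exact hdisj a (Set.mem_insert _ _) i (Set.mem_insert_of_mem _ hi)
      (fun h => ha (h ▸ hi))
  rw [Set.ncard_union_eq hd (hfin a (Set.mem_insert _ _))
    (Set.Finite.biUnion hsf (fun i hi => hfin i (Set.mem_insert_of_mem _ hi)))]
  rw [ih (fun i hi => hcard i (Set.mem_insert_of_mem _ hi))
    (fun i hi => hfin i (Set.mem_insert_of_mem _ hi))
    (fun i hi j hj hij => hdisj i (Set.mem_insert_of_mem _ hi) j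
      (Set.mem_insert_of_mem _ hj) hij)]
  rw [Set.ncard_insert_of_notMem ha hsf, hcard a (Set.mem_insert _ _)]
  ring

lemma my_ncard_biUnion_le {ι α : Type*} {s : Set ι} (hs : s.Finite) {t : ι → Set α} {k : ℕ} :
    (∀ i ∈ s, (t i).ncard ≤ k) → (⋃ i ∈ s, t i).ncard ≤ s.ncard * k := by
  refine Set.Finite.induction_on (motive := fun s _ => (∀ i ∈ s, (t i).ncard ≤ k) →
    (⋃ i ∈ s, t i).ncard ≤ s.ncard * k) s hs (by simp) ?_
  intro a s ha hsf ih hcard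
  rw [Set.biUnion_insert, Set.ncard_insert_of_notMem ha hsf]
  calc (t a ∪ ⋃ i ∈ s, t i).ncard ≤ (t a).ncard + (⋃ i ∈ s, t i).ncard :=
        Set.ncard_union_le _ _
    _ ≤ k + s.ncard * k := by
        have := ih (fun i hi => hcard i (Set.mem_insert_of_mem _ hi))
        have := hcard a (Set.mem_insert _ _)
        omega
    _ = (s.ncard + 1) * k := by ring

lemma red_nbrSet_eq (ψ : G ≃g reducedGraph G F) (x : V) :
    (reducedGraph G F).neighborSet (ψ x) = (fun u => ψ u) '' (G.neighborSet x) := by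
  ext y
  constructor
  · intro hy
    refine ⟨ψ.symm y, ?_, by simp⟩
    have h1 : (reducedGraph G F).Adj (ψ x) (ψ (ψ.symm y)) := by simpa using hy
    exact ψ.map_adj_iff.mp h1
  · rintro ⟨u, hu, rfl⟩
    exact ψ.map_adj_iff.mpr hu

lemma boundary_subset_closure {C : Set V} : vBoundary G C ⊆ vClosure G C :=
  fun _ hx => Or.inr hx

end CountAux
section DegreeAux

open SimpleGraph Set

variable {V : Type*} {G : SimpleGraph V} {F : Set V}

lemma S_finite_of_red_nbr_finite (hF2 : AxiomF2 G F) (hH1 : AxiomH1 G F)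
    {θX : ℕ} (hθ : 2 ≤ θX)
    (hθX : ∀ C : Set V, IsCellOf G F C → (vBoundary G C).ncard = θX)
    {v : V} (hvF : v ∈ F)
    (hNred : ((reducedGraph G F).neighborSet ⟨v, hvF⟩).Finite) :
    {C : Set V | IsCellOf G F C ∧ v ∈ vBoundary G C}.Finite := by
  set S := {C : Set V | IsCellOf G F C ∧ v ∈ vBoundary G C} with hS
  rw [← Set.finite_coe_iff]
  have hNfin : Finite ↥((reducedGraph G F).neighborSet ⟨v, hvF⟩) := hNred
  have hz : ∀ C : ↥S, ∃ z, z ∈ vBoundary G (C : Set V) ∧ z ≠ v := by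
    rintro ⟨C, hC, hvB⟩
    by_contra h
    push_neg at h
    have hsub : vBoundary G C ⊆ {v} := fun z hzB => h z hzB
    have := Set.ncard_le_ncard hsub (Set.finite_singleton v)
    rw [hθX C hC, Set.ncard_singleton] at this
    omega
  choose z hzB hzv using hz
  have hzF : ∀ C : ↥S, z C ∈ F := fun C => boundary_subset_F C.2.1 (hzB C)
  have hadj : ∀ C : ↥S,
      (⟨z C, hzF C⟩ : F) ∈ (reducedGraph G F).neighborSet ⟨v, hvF⟩ := by
    intro C
    exact ⟨fun h => (hzv C) (congrArg Subtype.val h).symm, (C : Set V), C.2.1, C.2.2, hzB C⟩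
  set g : ↥S → ↥((reducedGraph G F).neighborSet ⟨v, hvF⟩) :=
    fun C => ⟨⟨z C, hzF C⟩, hadj C⟩ with hg
  have hginj : Function.Injective g := by
    intro C D h
    by_contra hCD
    have hne : (C : Set V) ≠ (D : Set V) :=
      fun hh => hCD (Subtype.ext hh)
    have hsubs := hF2 _ _ C.2.1 D.2.1 hne
    have hzeq : z C = z D := congrArg (fun x => ((x : ↥((reducedGraph G F).neighborSet ⟨v, hvF⟩)) : F).1) h
    have hz1 : z C ∈ vClosure G (C : Set V) := boundary_subset_closure (hzB C)
    have hz2 : z C ∈ vClosure G (D : Set V) := by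
      rw [hzeq]; exact boundary_subset_closure (hzB D)
    have hv1 : v ∈ vClosure G (C : Set V) := boundary_subset_closure C.2.2
    have hv2 : v ∈ vClosure G (D : Set V) := boundary_subset_closure D.2.2
    exact (hzv C) (hsubs ⟨hz1, hz2⟩ ⟨hv1, hv2⟩)
  exact Finite.of_injective g hginj

lemma nbr_finite_of_not_mem_Fpow (hconn : G.Connected) (ψ : G ≃g reducedGraph G F)
    (hF1 : AxiomF1 G F) (hF2 : AxiomF2 G F) (hH1 : AxiomH1 G F)
    {θX : ℕ} (hθ : 2 ≤ θX)
    (hθX : ∀ C : Set V, IsCellOf G F C → (vBoundary G C).ncard = θX) :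
    ∀ n : ℕ, 1 ≤ n → ∀ v : V, v ∉ Fpow G F ψ n → (G.neighborSet v).Finite := by
  intro n
  induction n with
  | zero => omega
  | succ n ih =>
    intro _ v hv
    by_cases hvF : v ∈ F
    · rcases Nat.eq_zero_or_pos n with h0 | hn
      · subst h0
        exact absurd (mem_F_of_coe ψ hvF) hv
      · set w := ψ.symm ⟨v, hvF⟩ with hw
        have hψw : ψ w = ⟨v, hvF⟩ := by simp [hw]
        have hwn : w ∉ Fpow G F ψ n := by
          intro hmem
          apply hv
          show v ∈ (fun u => ((ψ u : F) : V)) '' Fpow G F ψ n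
          exact ⟨w, hmem, by simp only []; rw [hψw]⟩
        have hNw : (G.neighborSet w).Finite := ih hn w hwn
        have hNred : ((reducedGraph G F).neighborSet ⟨v, hvF⟩).Finite := by
          rw [← hψw, red_nbrSet_eq]
          exact hNw.image _
        have hSfin := S_finite_of_red_nbr_finite hF2 hH1 hθ hθX hvF hNred
        have hsub : G.neighborSet v ⊆
            ⋃ C ∈ {C : Set V | IsCellOf G F C ∧ v ∈ vBoundary G C}, vClosure G C := by
          intro c hc
          have hadj : G.Adj v c := hc
          have hcF : c ∉ F := fun hcF => hF1 v hvF c hcF hadj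
          exact Set.mem_biUnion (x := cellOf G F c)
            ⟨cellOf_isCell hcF, mem_boundary_cellOf hvF hcF hadj⟩
            (Or.inl (mem_cellOf_self hcF))
        exact (Set.Finite.biUnion hSfin (fun C hC => hH1.1 C hC.1)).subset hsub
    · exact finite_nbr_of_not_mem_F hH1 hvF

end DegreeAux
section OriginAux

open SimpleGraph Set

variable {V : Type*} {G : SimpleGraph V} {F : Set V}

lemma not_finite_nbr_of_origin [Infinite V] (hconn : G.Connected)
    (ψ : G ≃g reducedGraph G F) (hF1 : AxiomF1 G F) (hF2 : AxiomF2 G F)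
    (hH1 : AxiomH1 G F) {θX : ℕ} (hθ : 2 ≤ θX)
    (hθX : ∀ C : Set V, IsCellOf G F C → (vBoundary G C).ncard = θX)
    {b : ℕ} (hb : ConstInnerDegree G F b) (hbθ : θX - 1 < b)
    {v : V} (hfix : ((ψ v : F) : V) = v) : ¬ (G.neighborSet v).Finite := by
  intro hfin
  have hvF : v ∈ F := hfix ▸ (ψ v).2
  have hψv : ψ v = ⟨v, hvF⟩ := Subtype.ext hfix
  -- v has at least one neighbor
  obtain ⟨w0, hw0⟩ := exists_ne v
  obtain ⟨p⟩ := hconn v w0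
  have hNne : (G.neighborSet v).Nonempty := by
    cases p with
    | nil => exact absurd rfl hw0
    | cons h q => exact ⟨_, h⟩
  set S := {C : Set V | IsCellOf G F C ∧ v ∈ vBoundary G C} with hS
  have hSim : S = (fun c => cellOf G F c) '' (G.neighborSet v) := by
    ext C
    constructor
    · rintro ⟨hC, hvC, c, hc, hadj⟩
      exact ⟨c, hadj, (cell_eq_cellOf hC hc).symm⟩
    · rintro ⟨c, hc, rfl⟩
      have hadj : G.Adj v c := hc
      have hcF : c ∉ F := fun hcF => hF1 v hvF c hcF hadj
      exact ⟨cellOf_isCell hcF, mem_boundary_cellOf hvF hcF hadj⟩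
  have hSfin : S.Finite := by rw [hSim]; exact hfin.image _
  have hSne : S.Nonempty := by
    rw [hSim]; exact hNne.image _
  -- lower bound : |N v| = |S| * b
  have hNeq : G.neighborSet v = ⋃ C ∈ S, {u | u ∈ C ∧ G.Adj v u} := by
    ext c
    constructor
    · intro hc
      have hadj : G.Adj v c := hc
      have hcF : c ∉ F := fun hcF => hF1 v hvF c hcF hadj
      exact Set.mem_biUnion (x := cellOf G F c)
        ⟨cellOf_isCell hcF, mem_boundary_cellOf hvF hcF hadj⟩
        ⟨mem_cellOf_self hcF, hadj⟩
    · intro hc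
      obtain ⟨C, hC, hcC, hadj⟩ := Set.mem_iUnion₂.mp hc
      exact hadj
  have hcount : ∀ C ∈ S, {u | u ∈ C ∧ G.Adj v u}.ncard = b := by
    intro C hC
    have hbc := hb C hC.1 v hC.2
    have hsets : {u ∈ vClosure G C | G.Adj v u} = {u | u ∈ C ∧ G.Adj v u} := by
      ext u
      constructor
      · rintro ⟨hu, hadj⟩
        cases hu with
        | inl h => exact ⟨h, hadj⟩
        | inr h =>
          have huF : u ∈ F := boundary_subset_F hC.1 h
          exact absurd hadj (hF1 v hvF u huF)
      · rintro ⟨hu, hadj⟩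
        exact ⟨Or.inl hu, hadj⟩
    rw [← hsets]
    exact hbc
  have hNcard : (G.neighborSet v).ncard = S.ncard * b := by
    rw [hNeq]
    refine my_ncard_biUnion_eq hSfin hcount ?_ ?_
    · intro C hC
      exact hfin.subset (fun u hu => hu.2)
    · intro C hC D hD hne
      have hdisj := cells_disjoint hC.1 hD.1 hne
      exact hdisj.mono (fun u hu => hu.1) (fun u hu => hu.1)
  -- upper bound : |N_red| ≤ |S| * (θX - 1)
  set T : Set V → Set ↥F := fun C => {y : ↥F | (y : V) ∈ vBoundary G C ∧ (y : V) ≠ v}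
    with hT
  have hsubred : (reducedGraph G F).neighborSet ⟨v, hvF⟩ ⊆ ⋃ C ∈ S, T C := by
    intro y hy
    obtain ⟨hne, C, hC, hvB, hyB⟩ := hy
    refine Set.mem_biUnion (x := C) ⟨hC, hvB⟩ ?_
    exact ⟨hyB, fun h => hne (Subtype.ext h.symm)⟩
  have hTfin : ∀ C ∈ S, (T C).Finite := by
    intro C hC
    have hBfin : (vBoundary G C).Finite := (hH1.1 C hC.1).subset boundary_subset_closure
    refine Set.Finite.of_finite_image ?_ (Set.injOn_of_injective Subtype.coe_injective)
    exact hBfin.subset (by rintro x ⟨y, ⟨hyB, -⟩, rfl⟩; exact hyB)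
  have hTcard : ∀ C ∈ S, (T C).ncard ≤ θX - 1 := by
    intro C hC
    have hBfin : (vBoundary G C).Finite := (hH1.1 C hC.1).subset boundary_subset_closure
    have himg : Subtype.val '' T C ⊆ vBoundary G C \ {v} := by
      rintro x ⟨y, ⟨hyB, hyv⟩, rfl⟩
      exact ⟨hyB, hyv⟩
    calc (T C).ncard = (Subtype.val '' T C).ncard :=
          (Set.ncard_image_of_injective _ Subtype.coe_injective).symm
      _ ≤ (vBoundary G C \ {v}).ncard := Set.ncard_le_ncard himg hBfin.diff
      _ = (vBoundary G C).ncard - 1 := Set.ncard_diff_singleton_of_mem hC.2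
      _ = θX - 1 := by rw [hθX C hC.1]
  have hredcard : ((reducedGraph G F).neighborSet ⟨v, hvF⟩).ncard =
      (G.neighborSet v).ncard := by
    rw [← hψv, red_nbrSet_eq]
    exact Set.ncard_image_of_injective _ (fun x y h => ψ.toEquiv.injective h)
  have hredfin : ((reducedGraph G F).neighborSet ⟨v, hvF⟩).Finite := by
    rw [← hψv, red_nbrSet_eq]
    exact hfin.image _
  have hUfin : (⋃ C ∈ S, T C).Finite := Set.Finite.biUnion hSfin hTfin
  have h1 : ((reducedGraph G F).neighborSet ⟨v, hvF⟩).ncard ≤ (⋃ C ∈ S, T C).ncard :=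
    Set.ncard_le_ncard hsubred hUfin
  have h2 : (⋃ C ∈ S, T C).ncard ≤ S.ncard * (θX - 1) :=
    my_ncard_biUnion_le hSfin hTcard
  have hS1 : 0 < S.ncard := (Set.ncard_pos hSfin).mpr hSne
  have hchain : S.ncard * b ≤ S.ncard * (θX - 1) := by
    rw [← hNcard, ← hredcard]
    omega
  have : b ≤ θX - 1 := Nat.le_of_mul_le_mul_left hchain hS1
  omega

end OriginAux
/-- In a homogeneously self-similar graph with constant inner degree
`b > θ_X − 1`, a vertex has infinite degree iff it lies in `F^n` for every
`n ≥ 1`, iff it is an origin vertex (fixed point of `ψ`). -/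
theorem infinite_degree_iff_origin_vertex
    {V : Type*} [Infinite V] (G : SimpleGraph V) (hconn : G.Connected)
    (F : Set V) (ψ : G ≃g reducedGraph G F)
    (hF1 : AxiomF1 G F) (hF2 : AxiomF2 G F) (hH1 : AxiomH1 G F)
    (ν : ℕ) (hν : 2 ≤ ν) (hH2 : AxiomH2 G F ν)
    (θX : ℕ) (hθ : 2 ≤ θX)
    (hθX : ∀ C : Set V, IsCellOf G F C → (vBoundary G C).ncard = θX)
    (b : ℕ) (hb : ConstInnerDegree G F b) (hbθ : θX - 1 < b)
    (v : V) :
    (¬ (G.neighborSet v).Finite ↔ ∀ n : ℕ, 1 ≤ n → v ∈ Fpow G F ψ n)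
    ∧ ((∀ n : ℕ, 1 ≤ n → v ∈ Fpow G F ψ n) ↔ ((ψ v : F) : V) = v) := by
  have hmain2 := origin_iff_mem_all hconn ψ hF1 v
  refine ⟨⟨?_, ?_⟩, hmain2⟩
  · intro hinf
    by_contra hnot
    push_neg at hnot
    obtain ⟨n, hn1, hvn⟩ := hnot
    exact hinf (nbr_finite_of_not_mem_Fpow hconn ψ hF1 hF2 hH1 hθ hθX n hn1 v hvn)
  · intro hmem
    exact not_finite_nbr_of_origin hconn ψ hF1 hF2 hH1 hθ hθX hb hbθ (hmain2.mp hmem)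
end

section
/- In a self-similar graph, for m < n and any n-cell C_n, the image φ^m(C_n ∩ F^m) is an (n−m)-cell, and every (n+1)-cell contains exactly μ n-cells and has boundary of size θ_X. -/
variable {V : Type*}

/-- the map `φ = ψ⁻¹`, applied to subsets of `F` (viewed inside `V`). -/
def phiSet {V : Type*} (G : SimpleGraph V) (F : Set V) (ψ : G ≃g reducedGraph G F)
    (S : Set V) : Set V :=
  (fun x : F => (ψ.symm x : V)) '' {x : F | (x : V) ∈ S}

section Chains

open Relation

variable {W : Type*} (H : SimpleGraph W) (A : Set W)

/-- steps within a set -/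
def chainRel : W → W → Prop := fun x y => H.Adj x y ∧ x ∈ A ∧ y ∈ A

variable {H A}

lemma chainRel_symm : Symmetric (chainRel H A) :=
  fun _ _ ⟨h, ha, hb⟩ => ⟨h.symm, hb, ha⟩

lemma chainRel_mono {B : Set W} (hAB : A ⊆ B) {a b : W} (h : chainRel H A a b) :
    chainRel H B a b := ⟨h.1, hAB h.2.1, hAB h.2.2⟩

lemma walk_to_chain {x y : A} (w : (H.induce A).Walk x y) :
    ReflTransGen (chainRel H A) x y := by
  induction w with
  | nil => exact .refl
  | @cons u v _ huv _ ih => exact .head ⟨huv, u.2, v.2⟩ ih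

lemma precon_induce_iff :
    (H.induce A).Preconnected ↔ ∀ a ∈ A, ∀ b ∈ A, ReflTransGen (chainRel H A) a b := by
  constructor
  · intro hp a ha b hb
    obtain ⟨w⟩ := hp ⟨a, ha⟩ ⟨b, hb⟩
    exact walk_to_chain w
  · intro h x y
    obtain ⟨a, ha⟩ := x
    obtain ⟨b, hb⟩ := y
    have hch := h a ha b hb
    clear h
    induction hch with
    | refl => rfl
    | @tail c d hac hcd ih =>
      exact (ih hcd.2.1).trans (SimpleGraph.Adj.reachable
        (by exact hcd.1 : (H.induce A).Adj ⟨c, hcd.2.1⟩ ⟨d, hcd.2.2⟩))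

end Chains

section Cells

open Relation

variable {W : Type*} {H : SimpleGraph W} {S C D : Set W}

lemma cell_precon_chain (hC : IsCellOf H S C) {a b : W} (ha : a ∈ C) (hb : b ∈ C) :
    ReflTransGen (chainRel H C) a b :=
  (precon_induce_iff.1 hC.2.2.1) a ha b hb

/-- existence of the cell containing a vertex outside S -/
lemma cell_exists {v : W} (hv : v ∉ S) : ∃ C, IsCellOf H S C ∧ v ∈ C := by
  classical
  set C : Set W := {w | ReflTransGen (chainRel H Sᶜ) v w} with hCdef
  have hvC : v ∈ C := ReflTransGen.refl
  have hCS : C ⊆ Sᶜ := by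
    intro w hw
    rcases hw.cases_tail with h | ⟨c, _, hcw⟩
    · subst h; exact hv
    · exact hcw.2.2
  have hchainC : ∀ w ∈ C, ReflTransGen (chainRel H C) v w := by
    intro w hw
    induction hw with
    | refl => exact .refl
    | @tail c d hvc hcd ih =>
      exact ih.tail ⟨hcd.1, hvc, hvc.tail hcd⟩
  refine ⟨C, ⟨⟨v, hvC⟩, hCS, ?_, ?_⟩, hvC⟩
  · refine precon_induce_iff.2 (fun a ha b hb => ?_)
    exact ((@ReflTransGen.symmetric _ _ ⟨fun _ _ h => chainRel_symm h⟩).symm _ _ (hchainC a ha)).trans (hchainC b hb)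
  · intro D hCD hDS hD
    refine Set.Subset.antisymm (fun d hd => ?_) hCD
    have := (precon_induce_iff.1 hD) v (hCD hvC) d hd
    exact this.lift id (fun a b hab => chainRel_mono hDS hab)

lemma cell_subset (hC : IsCellOf H S C) (hDS : D ⊆ Sᶜ)
    (hD : (H.induce D).Preconnected) {x : W} (hxC : x ∈ C) (hxD : x ∈ D) : D ⊆ C := by
  have hU : (H.induce (C ∪ D)).Preconnected := by
    refine precon_induce_iff.2 (fun a ha b hb => ?_)
    have hx : ∀ c ∈ C ∪ D, ReflTransGen (chainRel H (C ∪ D)) c x := by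
      rintro c (hc | hc)
      · exact (cell_precon_chain hC hc hxC).lift id
          (fun a b hab => chainRel_mono Set.subset_union_left hab)
      · exact ((precon_induce_iff.1 hD) c hc x hxD).lift id
          (fun a b hab => chainRel_mono Set.subset_union_right hab)
    exact (hx a ha).trans ((@ReflTransGen.symmetric _ _ ⟨fun _ _ h => chainRel_symm h⟩).symm _ _ (hx b hb))
  have := hC.2.2.2 (C ∪ D) Set.subset_union_left
    (Set.union_subset hC.2.1 hDS) hU
  rw [← this]; exact Set.subset_union_right

lemma mem_cell_of_adj (hC : IsCellOf H S C) {x c : W} (hx : x ∉ S)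
    (hadj : H.Adj x c) (hc : c ∈ C) : x ∈ C := by
  have h1 : ({x} ∪ C : Set W) ⊆ Sᶜ := by
    rintro a (rfl | ha)
    · exact hx
    · exact hC.2.1 ha
  have hpre : (H.induce ({x} ∪ C)).Preconnected := by
    refine precon_induce_iff.2 (fun a ha b hb => ?_)
    have key : ∀ a ∈ ({x} ∪ C : Set W), ReflTransGen (chainRel H ({x} ∪ C)) a c := by
      rintro a (rfl | ha)
      · exact ReflTransGen.single ⟨hadj, Or.inl rfl, Or.inr hc⟩
      · exact (cell_precon_chain hC ha hc).lift id
          (fun u v huv => chainRel_mono Set.subset_union_right huv)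
    exact (key a ha).trans ((@ReflTransGen.symmetric _ _ ⟨fun _ _ h => chainRel_symm h⟩).symm _ _ (key b hb))
  have := hC.2.2.2 ({x} ∪ C) Set.subset_union_right h1 hpre
  rw [← this]; exact Or.inl rfl

lemma cell_eq_of_mem (hC : IsCellOf H S C) (hD : IsCellOf H S D) {v : W}
    (hvC : v ∈ C) (hvD : v ∈ D) : C = D :=
  Set.Subset.antisymm (cell_subset hD hC.2.1 hC.2.2.1 hvD hvC)
    (cell_subset hC hD.2.1 hD.2.2.1 hvC hvD)

lemma boundary_subset_S (hC : IsCellOf H S C) : vBoundary H C ⊆ S := by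
  rintro v ⟨hvC, c, hc, hadj⟩
  by_contra hvS
  exact hvC (mem_cell_of_adj hC hvS hadj hc)

end Cells

section IsoTransport

open Relation

variable {W W' : Type*} {H : SimpleGraph W} {H' : SimpleGraph W'}

lemma iso_chain (e : H ≃g H') {A : Set W} {a b : W}
    (h : ReflTransGen (chainRel H A) a b) :
    ReflTransGen (chainRel H' (⇑e '' A)) (e a) (e b) := by
  refine h.lift (⇑e) (fun a b hab => ?_)
  exact ⟨e.map_adj_iff.2 hab.1, ⟨a, hab.2.1, rfl⟩, ⟨b, hab.2.2, rfl⟩⟩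

lemma iso_precon (e : H ≃g H') {A : Set W} (h : (H.induce A).Preconnected) :
    (H'.induce (⇑e '' A)).Preconnected := by
  refine precon_induce_iff.2 ?_
  rintro a ⟨a', ha', rfl⟩ b ⟨b', hb', rfl⟩
  exact iso_chain e ((precon_induce_iff.1 h) a' ha' b' hb')

lemma iso_cell (e : H ≃g H') {S C : Set W} (hC : IsCellOf H S C) :
    IsCellOf H' (⇑e '' S) (⇑e '' C) := by
  obtain ⟨⟨v, hv⟩, hCS, hpre, hmax⟩ := hC
  refine ⟨⟨e v, v, hv, rfl⟩, ?_, iso_precon e hpre, ?_⟩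
  · rintro x ⟨c, hc, rfl⟩ ⟨s, hs, hes⟩
    exact hCS hc (by rwa [e.toEquiv.injective hes] at hs)
  · intro D hCD hDS hDpre
    have hD' : D = ⇑e '' (⇑e.symm '' D) := by
      rw [Set.image_image]; simp
    have h1 : C ⊆ ⇑e.symm '' D := by
      intro c hc
      exact ⟨e c, hCD ⟨c, hc, rfl⟩, by simp⟩
    have h2 : ⇑e.symm '' D ⊆ Sᶜ := by
      rintro x ⟨d, hd, rfl⟩ hxS
      exact hDS hd ⟨e.symm d, hxS, by simp⟩
    have h3 := iso_precon e.symm (by rwa [hD'] at hDpre; )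
    have h4 : ⇑e.symm '' (⇑e '' (⇑e.symm '' D)) = ⇑e.symm '' D := by
      rw [Set.image_image]; simp
    rw [h4] at h3
    have := hmax _ h1 h2 h3
    rw [hD', this]

lemma iso_vBoundary (e : H ≃g H') (C : Set W) :
    vBoundary H' (⇑e '' C) = ⇑e '' vBoundary H C := by
  ext x
  constructor
  · rintro ⟨hx, c, ⟨c', hc', rfl⟩, hadj⟩
    refine ⟨e.symm x, ⟨?_, c', hc', ?_⟩, by simp⟩
    · intro h; exact hx ⟨e.symm x, h, by simp⟩
    · have : H'.Adj x (e c') := hadj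
      have := e.symm.map_adj_iff.2 this
      simpa using this
  · rintro ⟨v, ⟨hv, c, hc, hadj⟩, rfl⟩
    refine ⟨?_, e c, ⟨c, hc, rfl⟩, e.map_adj_iff.2 hadj⟩
    rintro ⟨v', hv', hev⟩
    exact hv (by rwa [e.toEquiv.injective hev] at hv')

end IsoTransport



section Spec

variable {G : SimpleGraph V} {F : Set V} (ψ : G ≃g reducedGraph G F)

/-- lift a subset of V (contained in F) to a subset of the subtype F -/
def liftF (F S : Set V) : Set F := {x : F | (x : V) ∈ S}

lemma coe_liftF {S : Set V} (hS : S ⊆ F) :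
    (fun x : F => (x : V)) '' liftF F S = S := by
  ext v
  constructor
  · rintro ⟨x, hx, rfl⟩; exact hx
  · intro hv; exact ⟨⟨v, hS hv⟩, hv, rfl⟩

lemma phiSet_eq (S : Set V) : phiSet G F ψ S = ⇑ψ.symm '' liftF F S := rfl

lemma Fpow_one : Fpow G F ψ 1 = F := by
  show (fun v => ((ψ v : F) : V)) '' Fpow G F ψ 0 = F
  rw [show Fpow G F ψ 0 = Set.univ from rfl, Set.image_univ]
  ext x
  constructor
  · rintro ⟨v, rfl⟩; exact (ψ v).2
  · intro hx; exact ⟨ψ.symm ⟨x, hx⟩, by simp⟩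

lemma Fpow_subset_F {k : ℕ} (hk : 1 ≤ k) : Fpow G F ψ k ⊆ F := by
  obtain ⟨j, rfl⟩ : ∃ j, k = j + 1 := ⟨k - 1, by omega⟩
  rintro x ⟨v, _, rfl⟩
  exact (ψ v).2

lemma Fpow_antitone (k : ℕ) : Fpow G F ψ (k + 1) ⊆ Fpow G F ψ k := by
  induction k with
  | zero => exact fun x _ => Set.mem_univ x
  | succ n ih => exact Set.image_mono ih

lemma liftF_Fpow_succ (k : ℕ) : liftF F (Fpow G F ψ (k + 1)) = ⇑ψ '' Fpow G F ψ k := by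
  ext x
  constructor
  · rintro ⟨v, hv, hvx⟩
    exact ⟨v, hv, Subtype.ext hvx⟩
  · rintro ⟨v, hv, rfl⟩
    exact ⟨v, hv, rfl⟩

lemma symm_image_liftF_Fpow (k : ℕ) :
    ⇑ψ.symm '' liftF F (Fpow G F ψ (k + 1)) = Fpow G F ψ k := by
  rw [liftF_Fpow_succ, Set.image_image]
  simp

end Spec

section Boundary

open Relation

variable {G : SimpleGraph V} {F : Set V}

lemma eq_univ_of_vBoundary_empty (hconn : G.Connected) {E : Set V} (hne : E.Nonempty)
    (hbd : vBoundary G E = ∅) : E = Set.univ := by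
  obtain ⟨v, hv⟩ := hne
  have key : ∀ (u w : V) (p : G.Walk u w), u ∈ E → w ∈ E := by
    intro u w p
    induction p with
    | nil => exact id
    | @cons a b c hab _ ih =>
      intro ha
      refine ih ?_
      by_contra hb
      exact (Set.eq_empty_iff_forall_notMem.1 hbd b) ⟨hb, a, ha, hab.symm⟩
  refine Set.eq_univ_of_forall fun w => ?_
  obtain ⟨p⟩ := hconn.preconnected v w
  exact key v w p hv

lemma exists_adj_of_connected [Infinite V] (hconn : G.Connected) : ∃ a b, G.Adj a b := by
  obtain ⟨u⟩ := hconn.nonempty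
  obtain ⟨v, hv⟩ := exists_ne u
  obtain ⟨p⟩ := hconn.preconnected u v
  cases p with
  | nil => exact absurd rfl (Ne.symm hv)
  | cons h _ => exact ⟨_, _, h⟩

lemma boundary_two {θX : ℕ} [Infinite V] (ψ : G ≃g reducedGraph G F) (hconn : G.Connected)
    (hθX : ∀ C : Set V, IsCellOf G F C → (vBoundary G C).ncard = θX)
    {E : Set V} (hE : IsCellOf G F E) :
    ∃ x y, x ∈ vBoundary G E ∧ y ∈ vBoundary G E ∧ x ≠ y := by
  have hF : F.Nonempty := ⟨↑(ψ (Classical.arbitrary V)), (ψ (Classical.arbitrary V)).2⟩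
  rcases Set.finite_or_infinite (vBoundary G E) with hfin | hinf
  · -- boundary finite
    have hne : (vBoundary G E).Nonempty := by
      rcases Set.eq_empty_or_nonempty (vBoundary G E) with h | h
      · exfalso
        have := eq_univ_of_vBoundary_empty hconn hE.1 h
        obtain ⟨f, hf⟩ := hF
        exact hE.2.1 (this ▸ Set.mem_univ f) hf
      · exact h
    have hθ1 : 1 ≤ θX := by
      rw [← hθX E hE]
      have := (Set.ncard_pos hfin).2 hne
      omega
    -- get a cell with two distinct boundary vertices from an edge
    obtain ⟨a, b, hab⟩ := exists_adj_of_connected hconn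
    have hadjX : (reducedGraph G F).Adj (ψ a) (ψ b) := ψ.map_adj_iff.2 hab
    obtain ⟨hne', E', hE', hx', hy'⟩ := hadjX
    have hne'' : ((ψ a : F) : V) ≠ ((ψ b : F) : V) := fun h => hne' (Subtype.ext h)
    have hE'fin : (vBoundary G E').Finite := by
      by_contra h
      have := Set.Infinite.ncard h
      rw [hθX E' hE'] at this
      omega
    have hθ2 : 1 < θX := by
      rw [← hθX E' hE']
      exact (Set.one_lt_ncard hE'fin).2 ⟨_, hx', _, hy', hne''⟩
    have : 1 < (vBoundary G E).ncard := by rw [hθX E hE]; exact hθ2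
    obtain ⟨x, hx, y, hy, hxy⟩ := (Set.one_lt_ncard hfin).1 this
    exact ⟨x, y, hx, hy, hxy⟩
  · obtain ⟨x, hx, y, hy, hxy⟩ := hinf.nontrivial
    exact ⟨x, y, hx, hy, hxy⟩

end Boundary

section LemmaB

open Relation

variable {G : SimpleGraph V} {F : Set V}

lemma reducedGraph_adj {x y : F} : (reducedGraph G F).Adj x y ↔ x ≠ y ∧ ∃ C : Set V,
    IsCellOf G F C ∧ (x : V) ∈ vBoundary G C ∧ (y : V) ∈ vBoundary G C := Iff.rfl

variable {S : Set V} {C : Set V}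

/-- one-cells meeting C are inside C -/
lemma oneCell_subset (hSF : S ⊆ F) (hC : IsCellOf G S C) {E : Set V}
    (hE : IsCellOf G F E) {e : V} (heE : e ∈ E) (heC : e ∈ C) : E ⊆ C :=
  cell_subset hC (hE.2.1.trans (Set.compl_subset_compl.2 hSF)) hE.2.2.1 heC heE

/-- core walk-conversion claim -/
lemma claimAB (hF1 : AxiomF1 G F) (hSF : S ⊆ F) (hC : IsCellOf G S C)
    {b : V} (hbC : b ∈ C) (hbF : b ∈ F) :
    ∀ {a : V}, ReflTransGen (chainRel G C) a b → a ∈ C →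
      ((∀ haF : a ∈ F, ReflTransGen (chainRel (reducedGraph G F) (liftF F (C ∩ F)))
          ⟨a, haF⟩ ⟨b, hbF⟩) ∧
        (a ∉ F → ∀ E, IsCellOf G F E → a ∈ E → ∃ w : F, (w : V) ∈ C ∧
          (w : V) ∈ vBoundary G E ∧
          ReflTransGen (chainRel (reducedGraph G F) (liftF F (C ∩ F))) w ⟨b, hbF⟩)) := by
  intro a hch
  induction hch using ReflTransGen.head_induction_on with
  | refl =>
    intro _
    constructor
    · intro haF
      exact ReflTransGen.refl
    · intro hbF'
      exact absurd hbF hbF'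
  | @head a c hrel hch ih =>
    intro haC
    have hcC : c ∈ C := hrel.2.2
    have hadj : G.Adj a c := hrel.1
    constructor
    · intro haF
      by_cases hcF : c ∈ F
      · exact absurd hadj (hF1 a haF c hcF)
      · obtain ⟨E', hE', hcE'⟩ := cell_exists (S := F) hcF
        obtain ⟨w, hwC, hwbd, hwchain⟩ := (ih hcC).2 hcF E' hE' hcE'
        have haBd : a ∈ vBoundary G E' :=
          ⟨fun h => hE'.2.1 h haF, c, hcE', hadj⟩
        by_cases hw : w = ⟨a, haF⟩
        · subst hw; exact hwchain
        · refine ReflTransGen.head ⟨?_, ⟨haC, haF⟩, ⟨hwC, w.2⟩⟩ hwchain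
          exact reducedGraph_adj.2 ⟨fun h => hw h.symm, E', hE', haBd, hwbd⟩
    · intro haF E hE haE
      by_cases hcF : c ∈ F
      · refine ⟨⟨c, hcF⟩, hcC, ?_, (ih hcC).1 hcF⟩
        exact ⟨fun h => hE.2.1 h hcF, a, haE, hadj.symm⟩
      · have hcE : c ∈ E := mem_cell_of_adj hE hcF hadj.symm haE
        exact (ih hcC).2 hcF E hE hcE

lemma B_nonempty {θX : ℕ} [Infinite V] (ψ : G ≃g reducedGraph G F) (hconn : G.Connected)
    (hθX : ∀ C : Set V, IsCellOf G F C → (vBoundary G C).ncard = θX)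
    (hSF : S ⊆ F)
    (hSind : ∀ x y : F, (x : V) ∈ S → (y : V) ∈ S → ¬ (reducedGraph G F).Adj x y)
    (hC : IsCellOf G S C) : (C ∩ F).Nonempty := by
  obtain ⟨v, hv⟩ := hC.1
  by_cases hvF : v ∈ F
  · exact ⟨v, hv, hvF⟩
  · obtain ⟨E, hE, hvE⟩ := cell_exists (S := F) hvF
    have hEC : E ⊆ C := oneCell_subset hSF hC hE hvE hv
    obtain ⟨x, y, hx, hy, hxy⟩ := boundary_two ψ hconn hθX hE
    have hxF : x ∈ F := boundary_subset_S hE hx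
    have hyF : y ∈ F := boundary_subset_S hE hy
    have hadjX : (reducedGraph G F).Adj ⟨x, hxF⟩ ⟨y, hyF⟩ :=
      reducedGraph_adj.2 ⟨fun h => hxy (congrArg Subtype.val h), E, hE, hx, hy⟩
    have key : ∀ z, z ∈ vBoundary G E → z ∉ S → z ∈ C ∩ F := by
      intro z hz hzS
      have hzF : z ∈ F := boundary_subset_S hE hz
      obtain ⟨hzE, e, heE, hze⟩ := hz
      exact ⟨mem_cell_of_adj hC hzS hze (hEC heE), hzF⟩
    by_cases hxS : x ∈ S
    · by_cases hyS : y ∈ S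
      · exact absurd hadjX (hSind _ _ hxS hyS)
      · exact ⟨y, key y hy hyS⟩
    · exact ⟨x, key x hx hxS⟩

lemma B_cell {θX : ℕ} [Infinite V] (ψ : G ≃g reducedGraph G F) (hconn : G.Connected)
    (hF1 : AxiomF1 G F)
    (hθX : ∀ C : Set V, IsCellOf G F C → (vBoundary G C).ncard = θX)
    (hSF : S ⊆ F)
    (hSind : ∀ x y : F, (x : V) ∈ S → (y : V) ∈ S → ¬ (reducedGraph G F).Adj x y)
    (hC : IsCellOf G S C) :
    IsCellOf (reducedGraph G F) (liftF F S) (liftF F (C ∩ F)) := by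
  obtain ⟨v, hvC, hvF⟩ := B_nonempty ψ hconn hθX hSF hSind hC
  refine ⟨⟨⟨v, hvF⟩, hvC, hvF⟩, ?_, ?_, ?_⟩
  · -- inside complement
    rintro x ⟨hxC, -⟩ hxS
    exact hC.2.1 hxC hxS
  · -- preconnected
    refine precon_induce_iff.2 ?_
    rintro x ⟨hxC, hxF⟩ y ⟨hyC, hyF⟩
    have hch := cell_precon_chain hC hxC hyC
    have := ((claimAB hF1 hSF hC hyC hyF) hch hxC).1 hxF
    convert this using 2 <;> exact (Subtype.coe_eta _ _).symm
  · -- maximality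
    intro D hsub hDS hpre
    refine Set.Subset.antisymm ?_ hsub
    intro x hxD
    have hc0 : (⟨v, hvF⟩ : F) ∈ D := hsub ⟨hvC, hvF⟩
    have hch := (precon_induce_iff.1 hpre) _ hc0 x hxD
    have key : ∀ z : F, ReflTransGen (chainRel (reducedGraph G F) D) ⟨v, hvF⟩ z →
        (z : V) ∈ C := by
      intro z hz
      induction hz with
      | refl => exact hvC
      | @tail p q hp hpq ih =>
        obtain ⟨hne, E, hE, hpBd, hqBd⟩ := reducedGraph_adj.1 hpq.1
        obtain ⟨hpE, e, heE, hpe⟩ := hpBd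
        have heS : e ∉ S := fun h => hE.2.1 heE (hSF h)
        have heC : e ∈ C := mem_cell_of_adj hC heS hpe.symm ih
        have hEC : E ⊆ C := oneCell_subset hSF hC hE heE heC
        obtain ⟨hqE, e', he'E, hqe'⟩ := hqBd
        have hqS : (q : V) ∉ S := fun h => hDS hpq.2.2 h
        exact mem_cell_of_adj hC hqS hqe' (hEC he'E)
    exact ⟨key x hch, x.2⟩

lemma B_boundary {θX : ℕ} [Infinite V] (ψ : G ≃g reducedGraph G F) (hconn : G.Connected)
    (hF1 : AxiomF1 G F)
    (hθX : ∀ C : Set V, IsCellOf G F C → (vBoundary G C).ncard = θX)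
    (hSF : S ⊆ F)
    (hSind : ∀ x y : F, (x : V) ∈ S → (y : V) ∈ S → ¬ (reducedGraph G F).Adj x y)
    (hC : IsCellOf G S C) :
    vBoundary (reducedGraph G F) (liftF F (C ∩ F)) = liftF F (vBoundary G C) := by
  ext x
  constructor
  · rintro ⟨hxCt, c, hcCt, hadj⟩
    obtain ⟨hne, E, hE, hxBd, hcBd⟩ := reducedGraph_adj.1 hadj
    obtain ⟨hcE, e, heE, hce⟩ := hcBd
    have heS : e ∉ S := fun h => hE.2.1 heE (hSF h)
    have heC : e ∈ C := mem_cell_of_adj hC heS hce.symm hcCt.1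
    have hEC : E ⊆ C := oneCell_subset hSF hC hE heE heC
    obtain ⟨hxE, e', he'E, hxe'⟩ := hxBd
    have hxC : (x : V) ∉ C := fun h => hxCt ⟨h, x.2⟩
    exact ⟨hxC, e', hEC he'E, hxe'⟩
  · rintro ⟨hxC, c, hcC, hxc⟩
    have hxS : (x : V) ∈ S := boundary_subset_S hC ⟨hxC, c, hcC, hxc⟩
    have hcF : c ∉ F := fun h => hF1 _ x.2 c h hxc
    obtain ⟨E, hE, hcE⟩ := cell_exists (S := F) hcF
    have hEC : E ⊆ C := oneCell_subset hSF hC hE hcE hcC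
    have hxBd : (x : V) ∈ vBoundary G E := ⟨fun h => hxC (hEC h), c, hcE, hxc⟩
    obtain ⟨u, w, hu, hw, huw⟩ := boundary_two ψ hconn hθX hE
    -- pick z ∈ ∂E with z ≠ x
    obtain ⟨z, hz, hzx⟩ : ∃ z, z ∈ vBoundary G E ∧ z ≠ (x : V) := by
      by_cases h : u = (x : V)
      · exact ⟨w, hw, fun hh => huw (h ▸ hh ▸ rfl)⟩
      · exact ⟨u, hu, h⟩
    have hzF : z ∈ F := boundary_subset_S hE hz
    have hzS : z ∉ S := by
      intro hzS
      exact hSind ⟨z, hzF⟩ x hzS hxS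
        (reducedGraph_adj.2 ⟨fun h => hzx (congrArg Subtype.val h), E, hE, hz, hxBd⟩)
    have hzC : z ∈ C := by
      obtain ⟨hzE, e'', he''E, hze''⟩ := hz
      exact mem_cell_of_adj hC hzS hze'' (hEC he''E)
    refine ⟨fun h => hxC h.1, ⟨z, hzF⟩, ⟨hzC, hzF⟩, ?_⟩
    exact reducedGraph_adj.2 ⟨fun h => hzx (congrArg Subtype.val h).symm, E, hE, hxBd, hz⟩

end LemmaB

section FpowLevel

open Relation

variable {G : SimpleGraph V} {F : Set V}

lemma indepX (ψ : G ≃g reducedGraph G F) (hF1 : AxiomF1 G F) {k : ℕ} (hk : 1 ≤ k) :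
    ∀ x y : F, (x : V) ∈ Fpow G F ψ (k + 1) → (y : V) ∈ Fpow G F ψ (k + 1) →
      ¬ (reducedGraph G F).Adj x y := by
  intro x y hx hy hadj
  have hx' : x ∈ liftF F (Fpow G F ψ (k + 1)) := hx
  have hy' : y ∈ liftF F (Fpow G F ψ (k + 1)) := hy
  rw [liftF_Fpow_succ] at hx' hy'
  obtain ⟨a, ha, rfl⟩ := hx'
  obtain ⟨b, hb, rfl⟩ := hy'
  exact hF1 a (Fpow_subset_F ψ hk ha) b (Fpow_subset_F ψ hk hb) (ψ.map_adj_iff.1 hadj)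

variable [Infinite V]

lemma phi_cell (ψ : G ≃g reducedGraph G F) (hconn : G.Connected) (hF1 : AxiomF1 G F)
    {θX : ℕ} (hθX : ∀ C : Set V, IsCellOf G F C → (vBoundary G C).ncard = θX)
    {k : ℕ} (hk : 1 ≤ k) {C : Set V} (hC : IsCellOf G (Fpow G F ψ (k + 1)) C) :
    IsCellOf G (Fpow G F ψ k) (phiSet G F ψ (C ∩ F)) := by
  have hB := B_cell ψ hconn hF1 hθX (Fpow_subset_F ψ (by omega)) (indepX ψ hF1 hk) hC
  have h2 := iso_cell ψ.symm hB
  rw [symm_image_liftF_Fpow] at h2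
  rw [phiSet_eq]
  exact h2

lemma phi_cell_nonempty (ψ : G ≃g reducedGraph G F) (hconn : G.Connected)
    {θX : ℕ} (hθX : ∀ C : Set V, IsCellOf G F C → (vBoundary G C).ncard = θX)
    (hF1 : AxiomF1 G F)
    {k : ℕ} (hk : 1 ≤ k) {C : Set V} (hC : IsCellOf G (Fpow G F ψ (k + 1)) C) :
    (C ∩ F).Nonempty :=
  B_nonempty ψ hconn hθX (Fpow_subset_F ψ (by omega)) (indepX ψ hF1 hk) hC

lemma phi_boundary (ψ : G ≃g reducedGraph G F) (hconn : G.Connected) (hF1 : AxiomF1 G F)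
    {θX : ℕ} (hθX : ∀ C : Set V, IsCellOf G F C → (vBoundary G C).ncard = θX)
    {k : ℕ} (hk : 1 ≤ k) {C : Set V} (hC : IsCellOf G (Fpow G F ψ (k + 1)) C) :
    vBoundary G C = (fun v => ((ψ v : F) : V)) '' vBoundary G (phiSet G F ψ (C ∩ F)) := by
  have hbd := B_boundary ψ hconn hF1 hθX (Fpow_subset_F ψ (k := k + 1) (by omega))
    (indepX ψ hF1 hk) hC
  rw [phiSet_eq, iso_vBoundary ψ.symm, hbd, Set.image_image]
  have hsub : vBoundary G C ⊆ F :=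
    (boundary_subset_S hC).trans (Fpow_subset_F ψ (by omega))
  have : ∀ x : F, ((ψ (ψ.symm x) : F) : V) = (x : V) := by
    intro x; rw [ψ.apply_symm_apply]
  calc vBoundary G C = (fun x : F => (x : V)) '' liftF F (vBoundary G C) :=
        (coe_liftF hsub).symm
    _ = _ := by
        apply Set.image_congr
        intro x _
        exact (this x).symm

omit [Infinite V] in
lemma phiSet_mono {A B : Set V} (ψ : G ≃g reducedGraph G F) (h : A ⊆ B) :
    phiSet G F ψ A ⊆ phiSet G F ψ B := by
  rw [phiSet_eq, phiSet_eq]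
  exact Set.image_mono (fun x hx => h hx)

omit [Infinite V] in
lemma phiSet_inter_eq (ψ : G ≃g reducedGraph G F) {A B : Set V} :
    phiSet G F ψ (A ∩ B) = phiSet G F ψ A ∩ phiSet G F ψ B := by
  rw [phiSet_eq, phiSet_eq, phiSet_eq]
  rw [show liftF F (A ∩ B) = liftF F A ∩ liftF F B from rfl]
  exact Set.image_inter ψ.symm.injective

lemma phi_cell_injOn (ψ : G ≃g reducedGraph G F) (hconn : G.Connected) (hF1 : AxiomF1 G F)
    {θX : ℕ} (hθX : ∀ C : Set V, IsCellOf G F C → (vBoundary G C).ncard = θX)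
    {k : ℕ} (hk : 1 ≤ k) {C D : Set V}
    (hC : IsCellOf G (Fpow G F ψ (k + 1)) C) (hD : IsCellOf G (Fpow G F ψ (k + 1)) D)
    (heq : phiSet G F ψ (C ∩ F) = phiSet G F ψ (D ∩ F)) : C = D := by
  rw [phiSet_eq, phiSet_eq] at heq
  have h1 : liftF F (C ∩ F) = liftF F (D ∩ F) :=
    Set.image_injective.2 ψ.symm.injective heq
  have h2 : C ∩ F = D ∩ F := by
    have := congrArg (Set.image (fun x : F => (x : V))) h1
    rwa [coe_liftF Set.inter_subset_right, coe_liftF Set.inter_subset_right] at this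
  obtain ⟨v, hvC, hvF⟩ := phi_cell_nonempty ψ hconn hθX hF1 hk hC
  have hvD : v ∈ D := (h2.subset ⟨hvC, hvF⟩).1
  exact cell_eq_of_mem hC hD hvC hvD

end FpowLevel

section Count

variable {G : SimpleGraph V} {F : Set V} [Infinite V]

omit [Infinite V] in
lemma phiSet_Fpow (ψ : G ≃g reducedGraph G F) (m : ℕ) :
    phiSet G F ψ (Fpow G F ψ (m + 1)) = Fpow G F ψ m := by
  rw [phiSet_eq, symm_image_liftF_Fpow]

lemma count_transport (ψ : G ≃g reducedGraph G F) (hconn : G.Connected) (hF1 : AxiomF1 G F)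
    {θX : ℕ} (hθX : ∀ C : Set V, IsCellOf G F C → (vBoundary G C).ncard = θX)
    {k : ℕ} (hk : 1 ≤ k) {C : Set V} (hC : IsCellOf G (Fpow G F ψ (k + 2)) C) :
    {D : Set V | IsCellOf G (Fpow G F ψ (k + 1)) D ∧ D ⊆ C}.ncard
      = {D : Set V | IsCellOf G (Fpow G F ψ k) D ∧ D ⊆ phiSet G F ψ (C ∩ F)}.ncard := by
  set f : Set V → Set V := fun D => phiSet G F ψ (D ∩ F) with hf
  have himg : f '' {D : Set V | IsCellOf G (Fpow G F ψ (k + 1)) D ∧ D ⊆ C}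
      = {D : Set V | IsCellOf G (Fpow G F ψ k) D ∧ D ⊆ phiSet G F ψ (C ∩ F)} := by
    ext D'
    constructor
    · rintro ⟨D, ⟨hD, hDC⟩, rfl⟩
      refine ⟨phi_cell ψ hconn hF1 hθX hk hD, ?_⟩
      exact phiSet_mono ψ (Set.inter_subset_inter_left F hDC)
    · rintro ⟨hD', hD'C⟩
      obtain ⟨d, hd⟩ := hD'.1
      have hdF : (↑(ψ d) : V) ∈ F := (ψ d).2
      have hx : (↑(ψ d) : V) ∉ Fpow G F ψ (k + 1) := by
        rintro ⟨a, ha, hax⟩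
        have : a = d := ψ.injective (Subtype.ext hax)
        subst this
        exact hD'.2.1 hd ha
      obtain ⟨D₀, hD₀, hxD₀⟩ := cell_exists (S := Fpow G F ψ (k + 1)) hx
      have hD₀cell : IsCellOf G (Fpow G F ψ k) (f D₀) :=
        phi_cell ψ hconn hF1 hθX hk hD₀
      have hdfD₀ : d ∈ f D₀ := by
        exact show d ∈ ⇑ψ.symm '' liftF F (D₀ ∩ F) from
          ⟨ψ d, ⟨hxD₀, hdF⟩, ψ.symm_apply_apply d⟩
      have hfeq : f D₀ = D' := cell_eq_of_mem hD₀cell hD' hdfD₀ hd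
      have hD₀C : D₀ ⊆ C := by
        have hsub : f D₀ ⊆ phiSet G F ψ (C ∩ F) := hfeq ▸ hD'C
        have hsub2 : ⇑ψ.symm '' liftF F (D₀ ∩ F) ⊆ ⇑ψ.symm '' liftF F (C ∩ F) := hsub
        have h1 : liftF F (D₀ ∩ F) ⊆ liftF F (C ∩ F) :=
          (Set.image_subset_image_iff ψ.symm.injective).1 hsub2
        have h2 : D₀ ∩ F ⊆ C := by
          intro v hv
          exact (h1 (show (⟨v, hv.2⟩ : F) ∈ liftF F (D₀ ∩ F) from hv)).1
        obtain ⟨v₀, hv₀⟩ := phi_cell_nonempty ψ hconn hθX hF1 hk hD₀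
        exact cell_subset hC
          (hD₀.2.1.trans (Set.compl_subset_compl.2 (Fpow_antitone ψ (k + 1))))
          hD₀.2.2.1 (h2 hv₀) hv₀.1
      exact ⟨D₀, ⟨hD₀, hD₀C⟩, hfeq⟩
  have hinj : Set.InjOn f {D : Set V | IsCellOf G (Fpow G F ψ (k + 1)) D ∧ D ⊆ C} := by
    intro D₁ h₁ D₂ h₂ heq
    exact phi_cell_injOn ψ hconn hF1 hθX hk h₁.1 h₂.1 heq
  rw [← himg, Set.ncard_image_of_injOn hinj]

end Count


/-- In a self-similar graph: (i) for `m < n` and any n-cell `C_n`, the image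
`φ^m(C_n ∩ F^m)` is an (n−m)-cell; (ii) every (n+1)-cell contains exactly `μ`
n-cells and has boundary of size `θ_X`. -/
theorem phi_image_is_cell_and_cell_count
    {V : Type*} [Infinite V] (G : SimpleGraph V) (hconn : G.Connected)
    (F : Set V) (ψ : G ≃g reducedGraph G F)
    (hF1 : AxiomF1 G F) (hF2 : AxiomF2 G F)
    (θX μ : ℕ)
    (hθX : ∀ C : Set V, IsCellOf G F C → (vBoundary G C).ncard = θX)
    (hμ : ∀ C₂ : Set V, IsCellOf G (Fpow G F ψ 2) C₂ →
      {D : Set V | IsCellOf G F D ∧ D ⊆ C₂}.ncard = μ) :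
    (∀ m n : ℕ, 1 ≤ m → m < n → ∀ Cn : Set V, IsCellOf G (Fpow G F ψ n) Cn →
      IsCellOf G (Fpow G F ψ (n - m)) ((phiSet G F ψ)^[m] (Cn ∩ Fpow G F ψ m)))
    ∧ (∀ n : ℕ, 1 ≤ n → ∀ Cn1 : Set V, IsCellOf G (Fpow G F ψ (n + 1)) Cn1 →
        {D : Set V | IsCellOf G (Fpow G F ψ n) D ∧ D ⊆ Cn1}.ncard = μ
        ∧ (vBoundary G Cn1).ncard = θX) := by
  have hpsiInj : Function.Injective (fun v => ((ψ v : F) : V)) :=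
    fun a b h => ψ.injective (Subtype.ext h)
  constructor
  · -- part (i)
    intro m n hm hmn Cn hCn
    induction m, hm using Nat.le_induction generalizing n Cn with
    | base =>
      obtain ⟨k, rfl⟩ : ∃ k, n = k + 1 := ⟨n - 1, by omega⟩
      have hk : 1 ≤ k := by omega
      rw [Function.iterate_one, Fpow_one]
      have := phi_cell ψ hconn hF1 hθX hk hCn
      simpa [Nat.add_sub_cancel] using this
    | succ m hm ih =>
      obtain ⟨k, rfl⟩ : ∃ k, n = k + 1 := ⟨n - 1, by omega⟩
      have hstep : phiSet G F ψ (Cn ∩ Fpow G F ψ (m + 1))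
          = phiSet G F ψ (Cn ∩ F) ∩ Fpow G F ψ m := by
        have h1 : Cn ∩ Fpow G F ψ (m + 1) = (Cn ∩ F) ∩ Fpow G F ψ (m + 1) := by
          rw [Set.inter_assoc]
          congr 1
          exact (Set.inter_eq_right.2 (Fpow_subset_F ψ (by omega))).symm
        rw [h1, phiSet_inter_eq ψ, phiSet_Fpow ψ m]
      have hC' : IsCellOf G (Fpow G F ψ k) (phiSet G F ψ (Cn ∩ F)) :=
        phi_cell ψ hconn hF1 hθX (by omega) hCn
      have hIH := ih k (by omega) _ hC'
      rw [Function.iterate_succ_apply, hstep]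
      have : k + 1 - (m + 1) = k - m := by omega
      rw [this]
      exact hIH
  · -- part (ii)
    intro n hn Cn1 hC
    induction n, hn using Nat.le_induction generalizing Cn1 with
    | base =>
      constructor
      · have := hμ Cn1 hC
        simpa [Fpow_one] using this
      · have hbd := phi_boundary ψ hconn hF1 hθX (le_refl 1) hC
        have hcell : IsCellOf G (Fpow G F ψ 1) (phiSet G F ψ (Cn1 ∩ F)) :=
          phi_cell ψ hconn hF1 hθX (le_refl 1) hC
        rw [Fpow_one] at hcell
        rw [hbd, Set.ncard_image_of_injective _ hpsiInj]
        exact hθX _ hcell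
    | succ n hn ih =>
      have hC' : IsCellOf G (Fpow G F ψ (n + 1)) (phiSet G F ψ (Cn1 ∩ F)) :=
        phi_cell ψ hconn hF1 hθX (by omega) hC
      obtain ⟨hcount, hbdcard⟩ := ih _ hC'
      constructor
      · rw [count_transport ψ hconn hF1 hθX hn hC]
        exact hcount
      · rw [phi_boundary ψ hconn hF1 hθX (by omega) hC,
          Set.ncard_image_of_injective _ hpsiInj]
        exact hbdcard
end
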